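/- Let (X, μ) be a probability space and let α : X → A be a finite measurable observable. For δ > 0 and n ∈ ℕ, let Ξ(α, δ, n) = {φ ∈ Aⁿ : ‖φ_*(u_n) - α_*μ‖ < δ}, where ‖·‖ is the total variation norm on measures on the finite set A. Then inf_{δ>0} limsup_{n→∞} (1/n) log |Ξ(α, δ, n)| = H(α), where H(α) = -∑_{a∈A} μ(α⁻¹{a}) log μ(α⁻¹{a}) is the Shannon entropy of α. -/

import Mathlib

set_option linter.unusedSectionVars false
open MeasureTheory Filter

section aux
variable {A : Type*} [Fintype A]

private lemma ncard_eq [DecidableEq A] (n : ℕ) (φ : Fin n → A) (a : A) :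
    Nat.card {j : Fin n // φ j = a} = (Finset.univ.filter fun j : Fin n => φ j = a).card := by
  rw [Nat.card_eq_fintype_card, Fintype.card_subtype]

private lemma moment (n : ℕ) (h : Fin n → A → ℝ) :
    ∑ φ : Fin n → A, ∏ j, h j (φ j) = ∏ j, ∑ b, h j b := by
  classical
  rw [← Fintype.piFinset_univ, ← Finset.prod_univ_sum]

private lemma wt_total (p : A → ℝ) (hs : ∑ a, p a = 1) (n : ℕ) :
    ∑ φ : Fin n → A, ∏ j, p (φ j) = 1 := by
  rw [moment n fun _ b => p b]
  simp [hs]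

private lemma cnt_cast [DecidableEq A] (n : ℕ) (φ : Fin n → A) (a : A) :
    (Nat.card {j : Fin n // φ j = a} : ℝ) = ∑ j, (if φ j = a then (1:ℝ) else 0) := by
  rw [ncard_eq, Finset.card_filter]
  push_cast
  simp

private lemma moment_one [DecidableEq A] (p : A → ℝ) (hs : ∑ a, p a = 1) {n : ℕ} (j : Fin n)
    (a : A) :
    ∑ φ : Fin n → A, (∏ i, p (φ i)) * (if φ j = a then (1:ℝ) else 0) = p a := by
  have key : ∀ φ : Fin n → A, (∏ i, p (φ i)) * (if φ j = a then (1:ℝ) else 0)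
      = ∏ i, (p (φ i) * if i = j then (if φ i = a then (1:ℝ) else 0) else 1) := by
    intro φ
    rw [Finset.prod_mul_distrib,
      Finset.prod_ite_eq' Finset.univ j (fun i => if φ i = a then (1:ℝ) else 0)]
    simp
  simp_rw [key]
  rw [moment n fun i b => p b * if i = j then (if b = a then (1:ℝ) else 0) else 1]
  have h2 : ∀ i : Fin n, (∑ b, (p b * if i = j then (if b = a then (1:ℝ) else 0) else 1))
      = if i = j then p a else 1 := by
    intro i
    by_cases hij : i = j <;>
      simp [hij, mul_ite, mul_one, mul_zero, Finset.sum_ite_eq', hs]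
  simp_rw [h2]
  rw [Finset.prod_ite_eq' Finset.univ j fun _ => p a]
  simp

private lemma moment_two [DecidableEq A] (p : A → ℝ) (hs : ∑ a, p a = 1) {n : ℕ} {j j' : Fin n}
    (hjj : j ≠ j') (a : A) :
    ∑ φ : Fin n → A, (∏ i, p (φ i)) * (if φ j = a then (1:ℝ) else 0)
      * (if φ j' = a then (1:ℝ) else 0) = p a * p a := by
  have key : ∀ φ : Fin n → A, (∏ i, p (φ i)) * (if φ j = a then (1:ℝ) else 0)
      * (if φ j' = a then (1:ℝ) else 0)
      = ∏ i, (p (φ i) * (if i = j then (if φ i = a then (1:ℝ) else 0) else 1)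
          * (if i = j' then (if φ i = a then (1:ℝ) else 0) else 1)) := by
    intro φ
    rw [Finset.prod_mul_distrib, Finset.prod_mul_distrib,
      Finset.prod_ite_eq' Finset.univ j (fun i => if φ i = a then (1:ℝ) else 0),
      Finset.prod_ite_eq' Finset.univ j' (fun i => if φ i = a then (1:ℝ) else 0)]
    simp
  simp_rw [key]
  rw [moment n fun i b => p b * (if i = j then (if b = a then (1:ℝ) else 0) else 1)
      * (if i = j' then (if b = a then (1:ℝ) else 0) else 1)]
  have h2 : ∀ i : Fin n, (∑ b, (p b * (if i = j then (if b = a then (1:ℝ) else 0) else 1)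
      * (if i = j' then (if b = a then (1:ℝ) else 0) else 1)))
      = (if i = j then p a else 1) * (if i = j' then p a else 1) := by
    intro i
    by_cases hij : i = j <;> by_cases hij' : i = j'
    · exact absurd (hij.symm.trans hij') hjj
    · simp only [hij, hij']
      simp [mul_ite, mul_one, mul_zero, Finset.sum_ite_eq', if_neg hjj]
    · simp only [hij, hij']
      simp [mul_ite, mul_one, mul_zero, Finset.sum_ite_eq', if_neg (Ne.symm hjj)]
    · simp [hij, hij', hs]
  simp_rw [h2]
  rw [Finset.prod_mul_distrib, Finset.prod_ite_eq' Finset.univ j fun _ => p a,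
    Finset.prod_ite_eq' Finset.univ j' fun _ => p a]
  simp

private lemma moment_pair [DecidableEq A] (p : A → ℝ) (hs : ∑ a, p a = 1) {n : ℕ}
    (j j' : Fin n) (a : A) :
    ∑ φ : Fin n → A, (∏ i, p (φ i)) * (if φ j = a then (1:ℝ) else 0)
      * (if φ j' = a then (1:ℝ) else 0) = if j = j' then p a else p a * p a := by
  by_cases h : j = j'
  · subst h
    rw [if_pos rfl]
    have key : ∀ φ : Fin n → A, (∏ i, p (φ i)) * (if φ j = a then (1:ℝ) else 0)
        * (if φ j = a then (1:ℝ) else 0) = (∏ i, p (φ i)) * (if φ j = a then (1:ℝ) else 0) := by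
      intro φ; by_cases hφ : φ j = a <;> simp [hφ]
    simp_rw [key]
    exact moment_one p hs j a
  · rw [if_neg h]
    exact moment_two p hs h a

private lemma moment_sq [DecidableEq A] (p : A → ℝ) (hs : ∑ a, p a = 1) (n : ℕ) (a : A) :
    ∑ φ : Fin n → A, (∏ i, p (φ i)) * ((Nat.card {j : Fin n // φ j = a} : ℝ))^2
      = n * p a + ((n:ℝ)^2 - n) * (p a * p a) := by
  have key : ∀ φ : Fin n → A, (∏ i, p (φ i)) * ((Nat.card {j : Fin n // φ j = a} : ℝ))^2
      = ∑ j : Fin n, ∑ j' : Fin n, (∏ i, p (φ i)) * (if φ j = a then (1:ℝ) else 0)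
          * (if φ j' = a then (1:ℝ) else 0) := by
    intro φ
    rw [cnt_cast, sq, Finset.sum_mul_sum, Finset.mul_sum]
    refine Finset.sum_congr rfl fun j _ => ?_
    rw [Finset.mul_sum]
    exact Finset.sum_congr rfl fun j' _ => by ring
  simp_rw [key]
  rw [Finset.sum_comm]
  have swap2 : ∀ j : Fin n, (∑ φ : Fin n → A, ∑ j' : Fin n, (∏ i, p (φ i))
      * (if φ j = a then (1:ℝ) else 0) * (if φ j' = a then (1:ℝ) else 0))
      = ∑ j' : Fin n, (if j = j' then p a else p a * p a) := by
    intro j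
    rw [Finset.sum_comm]
    exact Finset.sum_congr rfl fun j' _ => moment_pair p hs j j' a
  simp_rw [swap2]
  have inner : ∀ j : Fin n, (∑ j' : Fin n, (if j = j' then p a else p a * p a))
      = p a * p a * n + (p a - p a * p a) := by
    intro j
    have e : ∀ j' : Fin n, (if j = j' then p a else p a * p a)
        = p a * p a + (if j = j' then p a - p a * p a else 0) := by
      intro j'; by_cases h : j = j' <;> simp [h]
    simp_rw [e]
    rw [Finset.sum_add_distrib, Finset.sum_const, Finset.sum_ite_eq]
    simp [Fintype.card_fin]
    ring
  simp_rw [inner]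
  rw [Finset.sum_const]
  simp [Fintype.card_fin]
  ring

private lemma moment_cnt [DecidableEq A] (p : A → ℝ) (hs : ∑ a, p a = 1) (n : ℕ) (a : A) :
    ∑ φ : Fin n → A, (∏ i, p (φ i)) * (Nat.card {j : Fin n // φ j = a} : ℝ) = n * p a := by
  have key : ∀ φ : Fin n → A, (∏ i, p (φ i)) * (Nat.card {j : Fin n // φ j = a} : ℝ)
      = ∑ j : Fin n, (∏ i, p (φ i)) * (if φ j = a then (1:ℝ) else 0) := by
    intro φ; rw [cnt_cast, Finset.mul_sum]
  simp_rw [key]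
  rw [Finset.sum_comm]
  rw [Finset.sum_congr rfl fun j _ => moment_one p hs j a]
  simp [Finset.sum_const, Fintype.card_fin, mul_comm]

private lemma variance_le [DecidableEq A] (p : A → ℝ) (hp : ∀ a, 0 ≤ p a) (hs : ∑ a, p a = 1)
    {n : ℕ} (hn : 0 < n) (a : A) :
    ∑ φ : Fin n → A, (∏ i, p (φ i)) * ((Nat.card {j : Fin n // φ j = a} : ℝ)/n - p a)^2
      ≤ 1 / n := by
  have hpa1 : p a ≤ 1 := by
    rw [← hs]; exact Finset.single_le_sum (fun b _ => hp b) (Finset.mem_univ a)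
  have hn' : (0:ℝ) < n := by exact_mod_cast hn
  have expand : ∀ φ : Fin n → A, (∏ i, p (φ i)) * ((Nat.card {j : Fin n // φ j = a} : ℝ)/n - p a)^2
      = (1/(n:ℝ)^2) * ((∏ i, p (φ i)) * ((Nat.card {j : Fin n // φ j = a} : ℝ))^2)
        - (2*p a/n) * ((∏ i, p (φ i)) * (Nat.card {j : Fin n // φ j = a} : ℝ))
        + (p a^2) * (∏ i, p (φ i)) := by
    intro φ
    field_simp
    ring
  simp_rw [expand]
  rw [Finset.sum_add_distrib, Finset.sum_sub_distrib, ← Finset.mul_sum, ← Finset.mul_sum,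
    ← Finset.mul_sum, moment_sq p hs n a, moment_cnt p hs n a, wt_total p hs n]
  have hgoal : (1/(n:ℝ)^2) * (n * p a + ((n:ℝ)^2 - n) * (p a * p a))
      - (2*p a/n) * (n * p a) + (p a^2) * 1 = (p a - p a^2)/n := by
    field_simp
    ring
  rw [hgoal]
  rw [div_le_div_iff₀ hn' hn']
  nlinarith [hp a]


private lemma cheb [DecidableEq A] (p : A → ℝ) (hp : ∀ a, 0 ≤ p a) (hs : ∑ a, p a = 1)
    {n : ℕ} (hn : 0 < n) {δ : ℝ} (hδ : 0 < δ) :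
    ∑ φ ∈ Finset.univ.filter (fun φ : Fin n → A =>
        ¬ (∑ a, |(Nat.card {j : Fin n // φ j = a} : ℝ)/n - p a| < δ)), (∏ i, p (φ i))
      ≤ (Fintype.card A : ℝ)^2 / (n * δ^2) := by
  have hwt : ∀ φ : Fin n → A, 0 ≤ ∏ i, p (φ i) := fun φ => Finset.prod_nonneg fun i _ => hp _
  have hn' : (0:ℝ) < n := by exact_mod_cast hn
  set bad := Finset.univ.filter (fun φ : Fin n → A =>
      ¬ (∑ a, |(Nat.card {j : Fin n // φ j = a} : ℝ)/n - p a| < δ)) with hbad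
  have hpt : ∀ φ ∈ bad, δ^2 ≤ (Fintype.card A : ℝ)
      * ∑ a, ((Nat.card {j : Fin n // φ j = a} : ℝ)/n - p a)^2 := by
    intro φ hφ
    have h1 : δ ≤ ∑ a, |(Nat.card {j : Fin n // φ j = a} : ℝ)/n - p a| :=
      le_of_not_gt (Finset.mem_filter.mp hφ).2
    have h2 : (∑ a, |(Nat.card {j : Fin n // φ j = a} : ℝ)/n - p a|)^2
        ≤ (Fintype.card A : ℝ) * ∑ a, ((Nat.card {j : Fin n // φ j = a} : ℝ)/n - p a)^2 := by
      have := sq_sum_le_card_mul_sum_sq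
        (s := (Finset.univ : Finset A))
        (f := fun a => |(Nat.card {j : Fin n // φ j = a} : ℝ)/n - p a|)
      simpa [sq_abs, Finset.card_univ] using this
    calc δ^2 ≤ (∑ a, |(Nat.card {j : Fin n // φ j = a} : ℝ)/n - p a|)^2 := by
          apply pow_le_pow_left₀ hδ.le h1 2
      _ ≤ _ := h2
  have step : δ^2 * ∑ φ ∈ bad, (∏ i, p (φ i)) ≤ (Fintype.card A : ℝ)^2 / n := by
    calc δ^2 * ∑ φ ∈ bad, (∏ i, p (φ i)) = ∑ φ ∈ bad, (∏ i, p (φ i)) * δ^2 := by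
          rw [Finset.mul_sum]; exact Finset.sum_congr rfl fun φ _ => by ring
      _ ≤ ∑ φ ∈ bad, (∏ i, p (φ i)) * ((Fintype.card A : ℝ)
            * ∑ a, ((Nat.card {j : Fin n // φ j = a} : ℝ)/n - p a)^2) := by
          refine Finset.sum_le_sum fun φ hφ => ?_
          exact mul_le_mul_of_nonneg_left (hpt φ hφ) (hwt φ)
      _ ≤ ∑ φ : Fin n → A, (∏ i, p (φ i)) * ((Fintype.card A : ℝ)
            * ∑ a, ((Nat.card {j : Fin n // φ j = a} : ℝ)/n - p a)^2) := by
          refine Finset.sum_le_sum_of_subset_of_nonneg (Finset.filter_subset _ _) fun φ _ _ => ?_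
          have h0 : 0 ≤ ∑ a, ((Nat.card {j : Fin n // φ j = a} : ℝ)/n - p a)^2 :=
            Finset.sum_nonneg fun a _ => sq_nonneg _
          exact mul_nonneg (hwt φ) (mul_nonneg (by positivity) h0)
      _ = (Fintype.card A : ℝ) * ∑ a, ∑ φ : Fin n → A,
            (∏ i, p (φ i)) * ((Nat.card {j : Fin n // φ j = a} : ℝ)/n - p a)^2 := by
          have e1 : ∀ φ : Fin n → A, (∏ i, p (φ i)) * ((Fintype.card A : ℝ)
              * ∑ a, ((Nat.card {j : Fin n // φ j = a} : ℝ)/n - p a)^2)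
              = ∑ a, (Fintype.card A : ℝ)
                  * ((∏ i, p (φ i)) * ((Nat.card {j : Fin n // φ j = a} : ℝ)/n - p a)^2) := by
            intro φ
            rw [Finset.mul_sum, Finset.mul_sum]
            exact Finset.sum_congr rfl fun a _ => by ring
          simp_rw [e1]
          rw [Finset.sum_comm]
          simp_rw [← Finset.mul_sum]
      _ ≤ (Fintype.card A : ℝ) * ∑ _a : A, 1/(n:ℝ) := by
          refine mul_le_mul_of_nonneg_left (Finset.sum_le_sum fun a _ => ?_) (by positivity)
          exact variance_le p hp hs hn a
      _ = (Fintype.card A : ℝ)^2 / n := by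
          rw [Finset.sum_const, Finset.card_univ]
          field_simp
          ring_nf
          rw [mul_assoc, mul_inv_cancel₀ hn'.ne', mul_one]
  have hδ2 : (0:ℝ) < δ^2 := by positivity
  rw [← le_div_iff₀' hδ2] at step
  calc ∑ φ ∈ bad, (∏ i, p (φ i)) ≤ (Fintype.card A : ℝ)^2 / n / δ^2 := step
    _ = (Fintype.card A : ℝ)^2 / (n * δ^2) := by rw [div_div]

private lemma prod_eq_pow_cnt [DecidableEq A] (q : A → ℝ) {n : ℕ} (φ : Fin n → A) :
    ∏ j, q (φ j) = ∏ a, q a ^ (Nat.card {j : Fin n // φ j = a}) := by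
  rw [Finset.prod_comp q φ]
  simp_rw [ncard_eq]
  refine Finset.prod_subset (Finset.subset_univ _) fun x _ hx => ?_
  have hfe : Finset.univ.filter (fun j : Fin n => φ j = x) = ∅ := by
    rw [Finset.filter_eq_empty_iff]
    intro j _ hj
    exact hx (Finset.mem_image.mpr ⟨j, Finset.mem_univ j, hj⟩)
  rw [hfe]
  simp

private lemma pow_le_exp' {x : ℝ} (hx : 0 ≤ x) (k : ℕ) :
    x ^ k ≤ Real.exp (k * Real.log x) := by
  rcases eq_or_lt_of_le hx with h | h
  · rcases Nat.eq_zero_or_pos k with hk | hk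
    · simp [hk]
    · rw [← h, zero_pow hk.ne']
      positivity
  · rw [← Real.log_pow, Real.exp_log (pow_pos h k)]

private lemma pow_eq_exp' {x : ℝ} (hx : 0 < x) (k : ℕ) :
    x ^ k = Real.exp (k * Real.log x) := by
  rw [← Real.log_pow, Real.exp_log (pow_pos hx k)]

private lemma log_sum_bound (p r : A → ℝ) {n : ℕ} {δ : ℝ} (k : A → ℕ)
    (hk : ∑ a, |(k a : ℝ)/n - p a| < δ) (hn : 0 < n) :
    |∑ a, (k a : ℝ) * Real.log (r a) - n * ∑ a, p a * Real.log (r a)|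
      ≤ n * δ * ∑ a, |Real.log (r a)| := by
  have hn' : (0:ℝ) < n := by exact_mod_cast hn
  have each : ∀ a, |(k a : ℝ) - n * p a| ≤ n * δ := by
    intro a
    have h1 : |(k a : ℝ)/n - p a| ≤ ∑ b, |(k b : ℝ)/n - p b| :=
      Finset.single_le_sum (f := fun b => |(k b : ℝ)/n - p b|)
        (fun b _ => abs_nonneg _) (Finset.mem_univ a)
    have h2 : |(k a : ℝ)/n - p a| ≤ δ := h1.trans hk.le
    have e : |(k a : ℝ) - n * p a| = n * |(k a : ℝ)/n - p a| := by
      rw [← abs_of_pos hn', ← abs_mul, abs_of_pos hn']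
      congr 1
      field_simp
    rw [e]
    exact mul_le_mul_of_nonneg_left h2 hn'.le
  calc |∑ a, (k a:ℝ) * Real.log (r a) - n * ∑ a, p a * Real.log (r a)|
      = |∑ a, ((k a:ℝ) - n * p a) * Real.log (r a)| := by
        rw [Finset.mul_sum, ← Finset.sum_sub_distrib]
        congr 1
        exact Finset.sum_congr rfl fun a _ => by ring
    _ ≤ ∑ a, |((k a:ℝ) - n * p a) * Real.log (r a)| := Finset.abs_sum_le_sum_abs _ _
    _ ≤ ∑ a, (n * δ) * |Real.log (r a)| := by
        refine Finset.sum_le_sum fun a _ => ?_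
        rw [abs_mul]
        exact mul_le_mul_of_nonneg_right (each a) (abs_nonneg _)
    _ = n * δ * ∑ a, |Real.log (r a)| := by rw [← Finset.mul_sum]

private lemma wt_le_exp [DecidableEq A] (p : A → ℝ) (hp : ∀ a, 0 ≤ p a) {n : ℕ} (hn : 0 < n)
    {δ : ℝ} (φ : Fin n → A)
    (hφ : ∑ a, |(Nat.card {j : Fin n // φ j = a} : ℝ)/n - p a| < δ) :
    ∏ j, p (φ j)
      ≤ Real.exp (n * ((∑ a, p a * Real.log (p a)) + δ * ∑ a, |Real.log (p a)|)) := by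
  rw [prod_eq_pow_cnt]
  calc ∏ a, p a ^ (Nat.card {j : Fin n // φ j = a})
      ≤ ∏ a, Real.exp ((Nat.card {j : Fin n // φ j = a} : ℝ) * Real.log (p a)) :=
        Finset.prod_le_prod (fun a _ => pow_nonneg (hp a) _)
          (fun a _ => pow_le_exp' (hp a) _)
    _ = Real.exp (∑ a, (Nat.card {j : Fin n // φ j = a} : ℝ) * Real.log (p a)) :=
        (Real.exp_sum _ _).symm
    _ ≤ _ := by
        rw [Real.exp_le_exp]
        have hb := log_sum_bound p p (fun a => Nat.card {j : Fin n // φ j = a}) hφ hn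
        have h2 := (abs_le.mp hb).2
        have e : (n:ℝ) * ((∑ a, p a * Real.log (p a)) + δ * ∑ a, |Real.log (p a)|)
            = n * (∑ a, p a * Real.log (p a)) + n * δ * ∑ a, |Real.log (p a)| := by ring
        rw [e]
        linarith

private lemma exp_le_wt [DecidableEq A] (p q : A → ℝ) (hq : ∀ a, 0 < q a) {n : ℕ} (hn : 0 < n)
    {δ : ℝ} (φ : Fin n → A)
    (hφ : ∑ a, |(Nat.card {j : Fin n // φ j = a} : ℝ)/n - p a| < δ) :
    Real.exp (n * ((∑ a, p a * Real.log (q a)) - δ * ∑ a, |Real.log (q a)|))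
      ≤ ∏ j, q (φ j) := by
  rw [prod_eq_pow_cnt]
  have e1 : ∏ a, q a ^ (Nat.card {j : Fin n // φ j = a})
      = Real.exp (∑ a, (Nat.card {j : Fin n // φ j = a} : ℝ) * Real.log (q a)) := by
    rw [Real.exp_sum]
    exact Finset.prod_congr rfl fun a _ => pow_eq_exp' (hq a) _
  rw [e1, Real.exp_le_exp]
  have hb := log_sum_bound p q (fun a => Nat.card {j : Fin n // φ j = a}) hφ hn
  have h1 := (abs_le.mp hb).1
  have e : (n:ℝ) * ((∑ a, p a * Real.log (q a)) - δ * ∑ a, |Real.log (q a)|)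
      = n * (∑ a, p a * Real.log (q a)) - n * δ * ∑ a, |Real.log (q a)| := by ring
  rw [e]
  linarith


private lemma Ncard_eq [DecidableEq A] (p : A → ℝ) (δ : ℝ) (n : ℕ) :
    Nat.card {φ : Fin n → A // ∑ a, |(Nat.card {j : Fin n // φ j = a} : ℝ)/n - p a| < δ}
      = (Finset.univ.filter fun φ : Fin n → A =>
          ∑ a, |(Nat.card {j : Fin n // φ j = a} : ℝ)/n - p a| < δ).card := by
  rw [Nat.card_eq_fintype_card, Fintype.card_subtype]

private lemma f_nonneg (p : A → ℝ) (δ : ℝ) (n : ℕ) :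
    0 ≤ (1/(n:ℝ)) * Real.log
      (Nat.card {φ : Fin n → A // ∑ a, |(Nat.card {j : Fin n // φ j = a} : ℝ)/n - p a| < δ}) := by
  apply mul_nonneg (by positivity)
  rcases Nat.eq_zero_or_pos
      (Nat.card {φ : Fin n → A // ∑ a, |(Nat.card {j : Fin n // φ j = a} : ℝ)/n - p a| < δ})
    with h | h
  · rw [h]
    simp
  · apply Real.log_nonneg
    exact_mod_cast h

private lemma f_le_log_card (p : A → ℝ) (δ : ℝ) (n : ℕ) :
    (1/(n:ℝ)) * Real.log
      (Nat.card {φ : Fin n → A // ∑ a, |(Nat.card {j : Fin n // φ j = a} : ℝ)/n - p a| < δ})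
      ≤ Real.log (Fintype.card A) + 1 := by
  classical
  have hcard : Nat.card {φ : Fin n → A // ∑ a, |(Nat.card {j : Fin n // φ j = a} : ℝ)/n - p a| < δ}
      ≤ Fintype.card A ^ n := by
    rw [Ncard_eq]
    calc (Finset.univ.filter fun φ : Fin n → A =>
          ∑ a, |(Nat.card {j : Fin n // φ j = a} : ℝ)/n - p a| < δ).card
        ≤ (Finset.univ : Finset (Fin n → A)).card := Finset.card_filter_le _ _
      _ = Fintype.card A ^ n := by rw [Finset.card_univ, Fintype.card_fun, Fintype.card_fin]
  have hlogA : 0 ≤ Real.log (Fintype.card A) := by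
    rcases Nat.eq_zero_or_pos (Fintype.card A) with h | h
    · simp [h]
    · apply Real.log_nonneg; exact_mod_cast h
  rcases Nat.eq_zero_or_pos n with hn | hn
  · simp [hn]
    linarith
  · have hn' : (0:ℝ) < n := by exact_mod_cast hn
    rcases Nat.eq_zero_or_pos
        (Nat.card {φ : Fin n → A // ∑ a, |(Nat.card {j : Fin n // φ j = a} : ℝ)/n - p a| < δ})
      with h | h
    · rw [h]
      push_cast
      rw [Real.log_zero, mul_zero]
      linarith
    · have hlog : Real.log
          (Nat.card {φ : Fin n → A // ∑ a, |(Nat.card {j : Fin n // φ j = a} : ℝ)/n - p a| < δ})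
          ≤ n * Real.log (Fintype.card A) := by
        calc Real.log (Nat.card {φ : Fin n → A //
              ∑ a, |(Nat.card {j : Fin n // φ j = a} : ℝ)/n - p a| < δ})
            ≤ Real.log ((Fintype.card A : ℝ) ^ n) := by
              apply Real.log_le_log (by exact_mod_cast h)
              exact_mod_cast hcard
          _ = n * Real.log (Fintype.card A) := by rw [Real.log_pow]
      calc (1/(n:ℝ)) * Real.log (Nat.card {φ : Fin n → A //
            ∑ a, |(Nat.card {j : Fin n // φ j = a} : ℝ)/n - p a| < δ})
          ≤ (1/(n:ℝ)) * (n * Real.log (Fintype.card A)) := by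
            apply mul_le_mul_of_nonneg_left hlog (by positivity)
        _ = Real.log (Fintype.card A) := by field_simp
        _ ≤ Real.log (Fintype.card A) + 1 := by linarith

private theorem main_upper (p q : A → ℝ) (hp : ∀ a, 0 ≤ p a)
    (hq : ∀ a, 0 < q a) (hq1 : ∑ a, q a = 1) {δ : ℝ} (hδ : 0 < δ) :
    limsup (fun n : ℕ => (1/(n:ℝ)) * Real.log
        (Nat.card {φ : Fin n → A // ∑ a, |(Nat.card {j : Fin n // φ j = a} : ℝ)/n - p a| < δ}))
        atTop
      ≤ -(∑ a, p a * Real.log (q a)) + δ * ∑ a, |Real.log (q a)| := by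
  classical
  have hqle1 : ∀ a, q a ≤ 1 := by
    intro a
    rw [← hq1]
    exact Finset.single_le_sum (f := q) (fun b _ => (hq b).le) (Finset.mem_univ a)
  have hRHS : 0 ≤ -(∑ a, p a * Real.log (q a)) + δ * ∑ a, |Real.log (q a)| := by
    have h1 : ∑ a, p a * Real.log (q a) ≤ 0 := by
      apply Finset.sum_nonpos
      intro a _
      exact mul_nonpos_of_nonneg_of_nonpos (hp a) (Real.log_nonpos (hq a).le (hqle1 a))
    have h2 : 0 ≤ ∑ a, |Real.log (q a)| := Finset.sum_nonneg fun a _ => abs_nonneg _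
    nlinarith
  apply limsup_le_of_le (isCoboundedUnder_le_of_le atTop fun n => f_nonneg p δ n)
  filter_upwards [eventually_ge_atTop 1] with n hn
  have hn0 : 0 < n := hn
  have hn' : (0:ℝ) < n := by exact_mod_cast hn0
  set N := Nat.card {φ : Fin n → A // ∑ a, |(Nat.card {j : Fin n // φ j = a} : ℝ)/n - p a| < δ}
    with hN
  set X := (n:ℝ) * ((∑ a, p a * Real.log (q a)) - δ * ∑ a, |Real.log (q a)|) with hX
  have key : (N:ℝ) * Real.exp X ≤ 1 := by
    rw [hN, Ncard_eq]
    set gd := Finset.univ.filter fun φ : Fin n → A =>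
      ∑ a, |(Nat.card {j : Fin n // φ j = a} : ℝ)/n - p a| < δ with hgd
    calc (gd.card : ℝ) * Real.exp X
        ≤ ∑ φ ∈ gd, ∏ j, q (φ j) := by
          have h := Finset.card_nsmul_le_sum gd (fun φ => ∏ j, q (φ j)) (Real.exp X)
            (fun φ hφ => exp_le_wt p q hq hn0 φ (Finset.mem_filter.mp hφ).2)
          simpa [nsmul_eq_mul] using h
      _ ≤ ∑ φ : Fin n → A, ∏ j, q (φ j) := by
          refine Finset.sum_le_sum_of_subset_of_nonneg (Finset.filter_subset _ _)
            fun φ _ _ => Finset.prod_nonneg fun j _ => (hq _).le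
      _ = 1 := wt_total q hq1 n
  rcases Nat.eq_zero_or_pos N with h | h
  · rw [h]
    push_cast
    rw [Real.log_zero, mul_zero]
    exact hRHS
  · have hN1 : (1:ℝ) ≤ (N:ℝ) := by exact_mod_cast h
    have hE : (0:ℝ) < Real.exp X := Real.exp_pos _
    have hNle : (N:ℝ) ≤ Real.exp (-X) := by
      rw [Real.exp_neg]
      calc (N:ℝ) = ((N:ℝ) * Real.exp X) * (Real.exp X)⁻¹ := by field_simp
        _ ≤ 1 * (Real.exp X)⁻¹ := mul_le_mul_of_nonneg_right key (by positivity)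
        _ = (Real.exp X)⁻¹ := one_mul _
    have hlog : Real.log N ≤ n * (-(∑ a, p a * Real.log (q a)) + δ * ∑ a, |Real.log (q a)|) := by
      calc Real.log N ≤ Real.log (Real.exp (-X)) := Real.log_le_log (by linarith) hNle
        _ = -X := Real.log_exp _
        _ = n * (-(∑ a, p a * Real.log (q a)) + δ * ∑ a, |Real.log (q a)|) := by
            rw [hX]; ring
    calc (1/(n:ℝ)) * Real.log N
        ≤ (1/(n:ℝ)) * (n * (-(∑ a, p a * Real.log (q a)) + δ * ∑ a, |Real.log (q a)|)) := by
          apply mul_le_mul_of_nonneg_left hlog (by positivity)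
      _ = -(∑ a, p a * Real.log (q a)) + δ * ∑ a, |Real.log (q a)| := by field_simp

private theorem main_lower (p : A → ℝ) (hp : ∀ a, 0 ≤ p a) (hs : ∑ a, p a = 1)
    {δ : ℝ} (hδ : 0 < δ) :
    -∑ a, p a * Real.log (p a)
      ≤ limsup (fun n : ℕ => (1/(n:ℝ)) * Real.log
          (Nat.card {φ : Fin n → A // ∑ a, |(Nat.card {j : Fin n // φ j = a} : ℝ)/n - p a| < δ}))
          atTop := by
  classical
  set L := ∑ a, p a * Real.log (p a) with hL
  set C := ∑ a, |Real.log (p a)| with hC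
  have hC0 : 0 ≤ C := Finset.sum_nonneg fun a _ => abs_nonneg _
  apply le_of_forall_pos_le_add
  intro ε hε
  set δ'' := min δ (ε/(2*(C+1))) with hδ''def
  have hδ''pos : 0 < δ'' := lt_min hδ (by positivity)
  have hδ''le : δ'' ≤ δ := min_le_left _ _
  have hδ''C : δ'' * C ≤ ε/2 := by
    have h1 : δ'' ≤ ε/(2*(C+1)) := min_le_right _ _
    have h2 : δ'' * C ≤ (ε/(2*(C+1))) * C := mul_le_mul_of_nonneg_right h1 hC0
    have h3 : (ε/(2*(C+1))) * C ≤ ε/2 := by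
      rw [div_mul_eq_mul_div, div_le_div_iff₀ (by positivity) (by norm_num)]
      nlinarith
    linarith
  set K := (Fintype.card A : ℝ) with hK
  have hK1 : 1 ≤ K := by
    rw [hK]
    have : 0 < Fintype.card A := by
      by_contra h
      push_neg at h
      interval_cases h' : Fintype.card A
      · have : IsEmpty A := Fintype.card_eq_zero_iff.mp h'
        simp [Finset.univ_eq_empty] at hs
    exact_mod_cast this
  have hev : ∀ᶠ n : ℕ in atTop, -L - ε ≤ (1/(n:ℝ)) * Real.log
      (Nat.card {φ : Fin n → A // ∑ a, |(Nat.card {j : Fin n // φ j = a} : ℝ)/n - p a| < δ}) := by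
    have h1 : ∀ᶠ n : ℕ in atTop, (2 * K^2 / δ''^2 : ℝ) ≤ n :=
      tendsto_natCast_atTop_atTop.eventually_ge_atTop _
    have h2 : ∀ᶠ n : ℕ in atTop, (2 * Real.log 2 / ε : ℝ) ≤ n :=
      tendsto_natCast_atTop_atTop.eventually_ge_atTop _
    filter_upwards [h1, h2, eventually_ge_atTop 1] with n hn1 hn2 hn3
    have hn0 : 0 < n := hn3
    have hn' : (0:ℝ) < n := by exact_mod_cast hn0
    have hbad : ∑ φ ∈ Finset.univ.filter (fun φ : Fin n → A =>
        ¬ (∑ a, |(Nat.card {j : Fin n // φ j = a} : ℝ)/n - p a| < δ'')), (∏ i, p (φ i))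
        ≤ 1/2 := by
      calc ∑ φ ∈ Finset.univ.filter (fun φ : Fin n → A =>
          ¬ (∑ a, |(Nat.card {j : Fin n // φ j = a} : ℝ)/n - p a| < δ'')), (∏ i, p (φ i))
          ≤ K^2 / (n * δ''^2) := cheb p hp hs hn0 hδ''pos
        _ ≤ 1/2 := by
          rw [div_le_div_iff₀ (by positivity) (by norm_num)]
          have hd2 : (0:ℝ) < δ''^2 := by positivity
          have : 2 * K^2 / δ''^2 * δ''^2 ≤ (n:ℝ) * δ''^2 :=
            mul_le_mul_of_nonneg_right hn1 hd2.le
          rw [div_mul_cancel₀ _ hd2.ne'] at this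
          linarith
    have hsplit := Finset.sum_filter_add_sum_filter_not Finset.univ
      (fun φ : Fin n → A => ∑ a, |(Nat.card {j : Fin n // φ j = a} : ℝ)/n - p a| < δ'')
      (fun φ => ∏ i, p (φ i))
    have htot := wt_total p hs n
    set gd := Finset.univ.filter (fun φ : Fin n → A =>
        ∑ a, |(Nat.card {j : Fin n // φ j = a} : ℝ)/n - p a| < δ'') with hgd
    have hgood : 1/2 ≤ ∑ φ ∈ gd, (∏ i, p (φ i)) := by linarith
    have hcount : 1/2 ≤ (gd.card : ℝ) * Real.exp ((n:ℝ) * (L + δ'' * C)) := by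
      calc (1:ℝ)/2 ≤ ∑ φ ∈ gd, ∏ i, p (φ i) := hgood
        _ ≤ (gd.card : ℝ) * Real.exp ((n:ℝ) * (L + δ'' * C)) := by
          have h := Finset.sum_le_card_nsmul gd (fun φ => ∏ i, p (φ i))
            (Real.exp ((n:ℝ) * (L + δ'' * C)))
            (fun φ hφ => wt_le_exp p hp hn0 φ (Finset.mem_filter.mp hφ).2)
          simpa [nsmul_eq_mul] using h
    have hmono : gd.card ≤ Nat.card {φ : Fin n → A //
        ∑ a, |(Nat.card {j : Fin n // φ j = a} : ℝ)/n - p a| < δ} := by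
      rw [Ncard_eq]
      apply Finset.card_le_card
      rw [hgd]
      exact Finset.monotone_filter_right _ fun φ _ hφ => lt_of_lt_of_le hφ hδ''le
    set N := Nat.card {φ : Fin n → A //
      ∑ a, |(Nat.card {j : Fin n // φ j = a} : ℝ)/n - p a| < δ} with hNdef
    have hE := Real.exp_pos ((n:ℝ) * (L + δ'' * C))
    have hgdpos : (0:ℝ) < (gd.card : ℝ) := by
      by_contra hcon
      push_neg at hcon
      have h0 : (gd.card : ℝ) = 0 := le_antisymm hcon (by positivity)
      rw [h0, zero_mul] at hcount
      linarith
    have hN1 : (1:ℝ) ≤ (N:ℝ) := by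
      have h1 : 0 < gd.card := by exact_mod_cast hgdpos
      have h2 : 1 ≤ N := le_trans h1 hmono
      exact_mod_cast h2
    have hlow : (1/2) * Real.exp (-((n:ℝ) * (L + δ'' * C))) ≤ (N:ℝ) := by
      have hgdN : (gd.card : ℝ) ≤ (N:ℝ) := by exact_mod_cast hmono
      rw [Real.exp_neg]
      calc (1/2) * (Real.exp ((n:ℝ) * (L + δ'' * C)))⁻¹
          ≤ ((gd.card:ℝ) * Real.exp ((n:ℝ) * (L + δ'' * C)))
              * (Real.exp ((n:ℝ) * (L + δ'' * C)))⁻¹ :=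
            mul_le_mul_of_nonneg_right hcount (by positivity)
        _ = (gd.card : ℝ) := by field_simp
        _ ≤ (N:ℝ) := hgdN
    have hlog : -Real.log 2 - (n:ℝ) * (L + δ'' * C) ≤ Real.log N := by
      calc -Real.log 2 - (n:ℝ)*(L + δ''*C)
          = Real.log ((1/2) * Real.exp (-((n:ℝ) * (L + δ'' * C)))) := by
            rw [Real.log_mul (by norm_num) (Real.exp_ne_zero _), Real.log_exp, one_div,
              Real.log_inv]
            ring
        _ ≤ Real.log N := Real.log_le_log (by positivity) hlow
    have heps2 : Real.log 2 / n ≤ ε/2 := by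
      rw [div_le_div_iff₀ hn' (by norm_num)]
      rw [div_le_iff₀ (by positivity)] at hn2
      nlinarith
    have hmul : (1/(n:ℝ)) * (-Real.log 2 - (n:ℝ)*(L + δ''*C)) ≤ (1/(n:ℝ)) * Real.log N :=
      mul_le_mul_of_nonneg_left hlog (by positivity)
    have e : (1/(n:ℝ)) * (-Real.log 2 - (n:ℝ)*(L + δ''*C)) = -(Real.log 2/n) - L - δ''*C := by
      field_simp
      ring
    rw [e] at hmul
    linarith
  have hbdd : IsBoundedUnder (· ≤ ·) atTop (fun n : ℕ => (1/(n:ℝ)) * Real.log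
      (Nat.card {φ : Fin n → A // ∑ a, |(Nat.card {j : Fin n // φ j = a} : ℝ)/n - p a| < δ})) :=
    isBoundedUnder_of ⟨Real.log (Fintype.card A) + 1, fun n => f_le_log_card p δ n⟩
  have hlim := le_limsup_of_frequently_le hev.frequently hbdd
  linarith

private theorem main_thm (p : A → ℝ) (hp : ∀ a, 0 ≤ p a) (hs : ∑ a, p a = 1) :
    (⨅ δ : {δ : ℝ // 0 < δ},
      limsup (fun n : ℕ => (1 / (n : ℝ)) * Real.log
        (Nat.card {φ : Fin n → A //
          ∑ a : A, |(Nat.card {j : Fin n // φ j = a} : ℝ) / n - p a| < (δ : ℝ)})) atTop)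
    = -∑ a : A, p a * Real.log (p a) := by
  classical
  have hbddB : BddBelow (Set.range fun δ : {δ : ℝ // 0 < δ} =>
      limsup (fun n : ℕ => (1 / (n : ℝ)) * Real.log
        (Nat.card {φ : Fin n → A //
          ∑ a : A, |(Nat.card {j : Fin n // φ j = a} : ℝ) / n - p a| < (δ : ℝ)})) atTop) := by
    refine ⟨0, ?_⟩
    rintro x ⟨δ, rfl⟩
    have hbdd : IsBoundedUnder (· ≤ ·) atTop (fun n : ℕ => (1/(n:ℝ)) * Real.log
        (Nat.card {φ : Fin n → A //
          ∑ a, |(Nat.card {j : Fin n // φ j = a} : ℝ)/n - p a| < (δ:ℝ)})) :=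
      isBoundedUnder_of ⟨Real.log (Fintype.card A) + 1, fun n => f_le_log_card p (δ:ℝ) n⟩
    exact le_limsup_of_frequently_le
      (Frequently.of_forall fun n => f_nonneg p (δ:ℝ) n) hbdd
  apply le_antisymm
  · apply le_of_forall_pos_le_add
    intro η hη
    set K := (Fintype.card A : ℝ) with hK
    have hK1 : 1 ≤ K := by
      rw [hK]
      have : 0 < Fintype.card A := by
        by_contra h
        push_neg at h
        interval_cases h' : Fintype.card A
        · have : IsEmpty A := Fintype.card_eq_zero_iff.mp h'
          simp [Finset.univ_eq_empty] at hs
      exact_mod_cast this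
    have hK0 : 0 < K := by linarith
    set ε := η/(2*K) with hε
    have hεpos : 0 < ε := by positivity
    set q := fun a => (p a + ε)/(1 + K*ε) with hq
    have hden : (0:ℝ) < 1 + K*ε := by positivity
    have hqpos : ∀ a, 0 < q a := fun a => div_pos (by have := hp a; linarith) hden
    have hq1 : ∑ a, q a = 1 := by
      rw [hq, ← Finset.sum_div, Finset.sum_add_distrib, hs, Finset.sum_const,
        Finset.card_univ, nsmul_eq_mul, ← hK]
      field_simp
    set Cq := ∑ a, |Real.log (q a)| with hCq
    have hCq0 : 0 ≤ Cq := Finset.sum_nonneg fun a _ => abs_nonneg _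
    set δ₀ := (η/2)/(Cq+1) with hδ₀def
    have hδ₀ : 0 < δ₀ := by positivity
    have h1 := main_upper p q hp hqpos hq1 hδ₀
    have h2 : (⨅ δ : {δ : ℝ // 0 < δ},
        limsup (fun n : ℕ => (1 / (n : ℝ)) * Real.log
          (Nat.card {φ : Fin n → A //
            ∑ a : A, |(Nat.card {j : Fin n // φ j = a} : ℝ) / n - p a| < (δ : ℝ)})) atTop)
        ≤ limsup (fun n : ℕ => (1 / (n : ℝ)) * Real.log
          (Nat.card {φ : Fin n → A //
            ∑ a : A, |(Nat.card {j : Fin n // φ j = a} : ℝ) / n - p a| < δ₀})) atTop :=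
      ciInf_le hbddB ⟨δ₀, hδ₀⟩
    have h3 : -∑ a, p a * Real.log (q a) ≤ -∑ a, p a * Real.log (p a) + K * ε := by
      have hlogq : ∀ a, Real.log (q a) = Real.log (p a + ε) - Real.log (1 + K*ε) := by
        intro a
        rw [hq]
        exact Real.log_div (by have := hp a; positivity) hden.ne'
      simp_rw [hlogq, mul_sub]
      rw [Finset.sum_sub_distrib, ← Finset.sum_mul, hs, one_mul]
      have hlog1 : Real.log (1 + K*ε) ≤ K*ε := by
        have := Real.log_le_sub_one_of_pos hden
        linarith
      have hterm : ∀ a, p a * Real.log (p a) ≤ p a * Real.log (p a + ε) := by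
        intro a
        rcases eq_or_lt_of_le (hp a) with h | h
        · rw [← h]
          simp
        · exact mul_le_mul_of_nonneg_left (Real.log_le_log h (by linarith)) (hp a)
      have hsum := Finset.sum_le_sum fun a (_ : a ∈ Finset.univ) => hterm a
      linarith
    have h4 : δ₀ * Cq ≤ η/2 := by
      have e : δ₀ * (Cq + 1) = η/2 := by
        rw [hδ₀def]
        field_simp
      nlinarith
    have h5 : K * ε = η/2 := by
      rw [hε]
      field_simp
    linarith
  · exact le_ciInf fun δ => main_lower p hp hs δ.2

end aux

/-- The exponential growth rate of the number of `δ`-good empirical approximations of a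
finite observable `α`, infimized over `δ > 0`, equals the Shannon entropy `H(α)`. -/
theorem stmt16 {X A : Type*} [MeasurableSpace X] (μ : Measure X) [IsProbabilityMeasure μ]
    [Fintype A] [MeasurableSpace A] [MeasurableSingletonClass A]
    (α : X → A) (hα : Measurable α) :
    (⨅ δ : {δ : ℝ // 0 < δ},
      limsup (fun n : ℕ => (1 / (n : ℝ)) * Real.log
        (Nat.card {φ : Fin n → A //
          ∑ a : A, |(Nat.card {j : Fin n // φ j = a} : ℝ) / n - (μ (α ⁻¹' {a})).toReal|
            < (δ : ℝ)})) atTop)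
    = -∑ a : A, (μ (α ⁻¹' {a})).toReal * Real.log (μ (α ⁻¹' {a})).toReal := by
  have hsum : ∑ a : A, (μ (α ⁻¹' {a})).toReal = 1 := by
    have h := sum_measure_preimage_singleton (μ := μ) Finset.univ
      (f := α) (fun a _ => hα (measurableSet_singleton a))
    rw [Finset.coe_univ, Set.preimage_univ, measure_univ] at h
    rw [← ENNReal.toReal_sum (fun a _ => measure_ne_top μ _), h, ENNReal.toReal_one]
  exact main_thm (fun a => (μ (α ⁻¹' {a})).toReal) (fun a => ENNReal.toReal_nonneg) hsum
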